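/- Let A = [[A_ff, A_fc],[A_cf, A_cc]], P = [[W],[I]], R = [Z, I], assume K = R·A·P is invertible, let Δ_F be any F×F matrix, and set δ_F = I − Δ_F·A_ff, δ_P = A_ff·W + A_fc, δ_R = Z·A_ff + A_cf, Ŵ = δ_F·W − Δ_F·A_fc. Let E = E_F·(I − P·K⁻¹·R·A) with E_F = I − [[Δ_F, 0],[0, 0]]·A, and let G = δ_F + Δ_F·δ_P·K⁻¹·δ_R. Then for every integer k ≥ 1, E^k = U · G^(k−1) · V, where U is the (F⊕C)×F block-column matrix with F-block δ_F − Ŵ·K⁻¹·δ_R and C-block −K⁻¹·δ_R, and V is the F×(F⊕C) block-row matrix [I, −W]. -/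

import Mathlib

open Matrix

lemma fromBlocks_sub' {l m n o α : Type*} [SubtractionMonoid α]
    (A : Matrix n l α) (B : Matrix n m α) (C : Matrix o l α) (D : Matrix o m α)
    (A' : Matrix n l α) (B' : Matrix n m α) (C' : Matrix o l α) (D' : Matrix o m α) :
    fromBlocks A B C D - fromBlocks A' B' C' D' =
      fromBlocks (A - A') (B - B') (C - C') (D - D') := by
  ext (_|_) (_|_) <;> simp [fromBlocks]

/-- **Outer-product form of powers of the two-grid error propagator.** With
`E = E_F·(I − P·K⁻¹·R·A)` and `G = δ_F + Δ_F·δ_P·K⁻¹·δ_R`, one has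
`E^k = U·G^(k−1)·V` for all `k ≥ 1`, where `U = [[δ_F − Ŵ·K⁻¹·δ_R],[−K⁻¹·δ_R]]`
and `V = [I, −W]`. -/
theorem error_prop_powers_outer_product
    {F C : Type*} [Fintype F] [Fintype C] [DecidableEq F] [DecidableEq C]
    (Aff : Matrix F F ℝ) (Afc : Matrix F C ℝ) (Acf : Matrix C F ℝ) (Acc : Matrix C C ℝ)
    (W : Matrix F C ℝ) (Z : Matrix C F ℝ) (ΔF : Matrix F F ℝ)
    (A : Matrix (F ⊕ C) (F ⊕ C) ℝ) (hA : A = fromBlocks Aff Afc Acf Acc)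
    (P : Matrix (F ⊕ C) C ℝ) (hP : P = fromRows W 1)
    (R : Matrix C (F ⊕ C) ℝ) (hR : R = fromCols Z 1)
    (K : Matrix C C ℝ) (hK : K = R * A * P) (hKinv : IsUnit K)
    (δF : Matrix F F ℝ) (hδF : δF = 1 - ΔF * Aff)
    (δP : Matrix F C ℝ) (hδP : δP = Aff * W + Afc)
    (δR : Matrix C F ℝ) (hδR : δR = Z * Aff + Acf)
    (Weff : Matrix F C ℝ) (hWeff : Weff = δF * W - ΔF * Afc)
    (EF : Matrix (F ⊕ C) (F ⊕ C) ℝ) (hEF : EF = 1 - fromBlocks ΔF 0 0 0 * A)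
    (E : Matrix (F ⊕ C) (F ⊕ C) ℝ) (hE : E = EF * (1 - P * K⁻¹ * R * A))
    (G : Matrix F F ℝ) (hG : G = δF + ΔF * δP * K⁻¹ * δR)
    (U : Matrix (F ⊕ C) F ℝ) (hU : U = fromRows (δF - Weff * K⁻¹ * δR) (-(K⁻¹ * δR)))
    (V : Matrix F (F ⊕ C) ℝ) (hV : V = fromCols 1 (-W)) :
    ∀ k : ℕ, 1 ≤ k → E ^ k = U * G ^ (k - 1) * V := by
  have hKi : K⁻¹ * K = 1 :=
    Matrix.nonsing_inv_mul K ((Matrix.isUnit_iff_isUnit_det K).mp hKinv)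
  set S : Matrix C C ℝ := Z * Afc + Acc with hS
  have hRA : R * A = fromCols δR S := by
    rw [hR, hA, fromCols_mul_fromBlocks, hδR]
    simp [hS]
  have hPK : P * K⁻¹ = fromRows (W * K⁻¹) K⁻¹ := by
    rw [hP, fromRows_mul, Matrix.one_mul]
  have hKS : K = δR * W + S := by
    rw [hK, hRA, hP, fromCols_mul_fromRows, Matrix.mul_one]
  have hKiS : K⁻¹ * S = 1 - K⁻¹ * (δR * W) := by
    have h1 : K⁻¹ * (δR * W) + K⁻¹ * S = 1 := by
      rw [← Matrix.mul_add, ← hKS, hKi]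
    exact eq_sub_of_add_eq' h1
  -- the second factor of E is an outer product
  have hN : (1 : Matrix (F ⊕ C) (F ⊕ C) ℝ) - P * K⁻¹ * R * A =
      fromRows (1 - W * K⁻¹ * δR) (-(K⁻¹ * δR)) * V := by
    have hPA : P * K⁻¹ * R * A = P * K⁻¹ * (R * A) := Matrix.mul_assoc _ _ _
    rw [hPA, hPK, hRA, fromRows_mul_fromCols, hV, fromRows_mul_fromCols,
      ← fromBlocks_one, fromBlocks_sub', fromBlocks_inj]
    refine ⟨by rw [Matrix.mul_one], ?_, by rw [Matrix.mul_one, zero_sub], ?_⟩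
    · rw [Matrix.mul_assoc W, hKiS]
      simp only [Matrix.mul_sub, Matrix.sub_mul, Matrix.mul_neg, Matrix.neg_mul,
        Matrix.one_mul, Matrix.mul_one, Matrix.mul_assoc, neg_neg]
      abel
    · rw [hKiS]
      simp only [Matrix.mul_sub, Matrix.sub_mul, Matrix.mul_neg, Matrix.neg_mul,
        Matrix.one_mul, Matrix.mul_one, Matrix.mul_assoc, neg_neg]
      abel
  have hEF' : EF = fromBlocks δF (-(ΔF * Afc)) 0 1 := by
    rw [hEF, hA, fromBlocks_multiply, ← fromBlocks_one, fromBlocks_sub', fromBlocks_inj]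
    refine ⟨?_, ?_, ?_, ?_⟩ <;> simp [hδF]
  have hEUV : E = U * V := by
    rw [hE, hN, ← Matrix.mul_assoc, hEF', fromBlocks_mul_fromRows, hU]
    congr 1
    rw [fromRows_ext_iff]
    constructor
    · rw [hWeff, hδF]
      simp only [Matrix.mul_sub, Matrix.sub_mul, Matrix.mul_neg, Matrix.neg_mul,
        Matrix.one_mul, Matrix.mul_one, Matrix.mul_assoc, neg_neg]
      abel
    · simp [Matrix.zero_mul, Matrix.one_mul]
  have hVU : V * U = G := by
    rw [hV, hU, fromCols_mul_fromRows, hG, hWeff, hδF, hδP]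
    simp only [Matrix.mul_sub, Matrix.sub_mul, Matrix.mul_add, Matrix.add_mul,
      Matrix.mul_neg, Matrix.neg_mul, Matrix.one_mul, Matrix.mul_one,
      Matrix.mul_assoc, neg_neg]
    abel
  intro k hk
  induction k with
  | zero => omega
  | succ n ih =>
    rcases Nat.lt_or_ge n 1 with h | h
    · interval_cases n
      simp [pow_one, hEUV]
    · have hn : n - 1 + 1 = n := Nat.succ_pred_eq_of_pos h
      rw [pow_succ, ih h, hEUV]
      have hassoc : U * G ^ (n - 1) * V * (U * V) = U * (G ^ (n - 1) * (V * U)) * V := by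
        simp only [Matrix.mul_assoc]
      rw [hassoc, hVU, ← pow_succ, hn]
      simp
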